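/- Assume ∏_{k∈ℤ/nℤ} x_k ≠ ∏_{k∈ℤ/nℤ} y_k and set p_j := (∏_k x_k − ∏_k y_k)/λ_j(x,y,z) for each j ∈ ℤ/nℤ. Then for every j: (a) x_{j+1}/(z_j(1 + y_j/(z_j p_j))) = (∏_k x_k − ∏_k y_k)/λ_{j+1}(x,y,z); (b) x_{j+1}/(1 + z_j p_j/y_j) = y_j λ_j(x,y,z)/λ_{j+1}(x,y,z); (c) y_j(1 + z_j p_j/y_j) = x_{j+1} λ_{j+1}(x,y,z)/λ_j(x,y,z); (d) y_j(1 + z_j p_j/y_j)/(p_j(1 + y_j/(z_j p_j))) = z_j. (These four identities describe the effect of one square move as the inserted edge of weight p propagates once around the cylinder.) -/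

import Mathlib

noncomputable section

lemma prod_range_cast_aux (n : ℕ) [NeZero n] (g : ZMod n → ℝ) :
    ∏ k ∈ Finset.range n, g (k : ZMod n) = ∏ t : ZMod n, g t := by
  refine Finset.prod_nbij (fun k => (k : ZMod n)) (fun a _ => Finset.mem_univ _)
    ?_ ?_ (fun _ _ => rfl)
  · intro a ha b hb hab
    simp only [Finset.mem_coe, Finset.mem_range] at ha hb
    have h2 := congrArg ZMod.val hab
    simpa [ZMod.val_cast_of_lt ha, ZMod.val_cast_of_lt hb] using h2
  · intro t _
    exact ⟨t.val, Finset.mem_coe.mpr (Finset.mem_range.mpr (ZMod.val_lt t)),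
      ZMod.natCast_rightInverse t⟩

lemma prod_range_shift_aux (n : ℕ) [NeZero n] (f : ZMod n → ℝ) (j : ZMod n) :
    ∏ k ∈ Finset.range n, f (j + (k : ZMod n)) = ∏ t : ZMod n, f t := by
  rw [prod_range_cast_aux n (fun t => f (j + t))]
  exact Equiv.prod_comp (Equiv.addLeft j) f

lemma prod_Icc_shift_aux (n : ℕ) [NeZero n] (f : ZMod n → ℝ) (j : ZMod n) :
    ∏ k ∈ Finset.Icc 1 n, f (j + (k : ZMod n)) = ∏ t : ZMod n, f t := by
  rw [show Finset.Icc 1 n = Finset.Ico 1 (n+1) by rw [Finset.Ico_add_one_right_eq_Icc],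
    Finset.prod_Ico_eq_prod_range]
  simp only [Nat.add_sub_cancel]
  rw [← prod_range_shift_aux n f (j + 1)]
  refine Finset.prod_congr rfl fun k _ => ?_
  congr 1
  push_cast
  ring

/-- `λ_i(x,y,z)` for a cylindric 2-loop expanded directed plabic network with
white-to-black edge weights `x` (left string), `y` (right string) and crossing edge weights
`z`, all indexed by `ZMod n`:
`λ_i = Σ_{j=0}^{n-1} (∏_{k=1}^{j} x_{i+k}) · z_{i+j} · (∏_{k=j+1}^{n-1} y_{i+k})`. -/
def lam (n : ℕ) (x y z : ZMod n → ℝ) (i : ZMod n) : ℝ :=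
  ∑ j ∈ Finset.range n,
    (∏ k ∈ Finset.Icc 1 j, x (i + (k : ZMod n))) * z (i + (j : ZMod n)) *
      ∏ k ∈ Finset.Icc (j + 1) (n - 1), y (i + (k : ZMod n))

lemma lam_pos (n : ℕ) [NeZero n] (x y z : ZMod n → ℝ)
    (hx : ∀ i, 0 < x i) (hy : ∀ i, 0 < y i) (hz : ∀ i, 0 < z i) (i : ZMod n) :
    0 < lam n x y z i := by
  apply Finset.sum_pos
  · intro m _
    exact mul_pos (mul_pos (Finset.prod_pos fun _ _ => hx _) (hz _))
      (Finset.prod_pos fun _ _ => hy _)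
  · exact Finset.nonempty_range_iff.mpr (NeZero.ne n)

def Gaux (n : ℕ) (x y z : ZMod n → ℝ) (j : ZMod n) (m : ℕ) : ℝ :=
  (∏ k ∈ Finset.Icc 1 m, x (j + (k : ZMod n))) * z (j + (m : ZMod n)) *
    ∏ k ∈ Finset.Icc (m + 1) n, y (j + (k : ZMod n))

lemma xpart_aux (n : ℕ) (x : ZMod n → ℝ) (j : ZMod n) (m : ℕ) :
    x (j + 1) * ∏ k ∈ Finset.Icc 1 m, x (j + 1 + (k : ZMod n)) =
      ∏ k ∈ Finset.Icc 1 (m + 1), x (j + (k : ZMod n)) := by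
  induction m with
  | zero => simp
  | succ m ih =>
    rw [Finset.prod_Icc_succ_top (Nat.le_add_left 1 m),
      Finset.prod_Icc_succ_top (Nat.le_add_left 1 (m + 1)), ← mul_assoc, ih]
    congr 1
    push_cast
    ring_nf

lemma key_aux (n : ℕ) [NeZero n] (x y z : ZMod n → ℝ) (j : ZMod n) :
    x (j + 1) * lam n x y z (j + 1) =
      y j * lam n x y z j + z j * ((∏ k : ZMod n, x k) - ∏ k : ZMod n, y k) := by
  obtain ⟨N, rfl⟩ : ∃ N, n = N + 1 := ⟨n - 1, (Nat.succ_pred_eq_of_pos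
    (Nat.pos_of_ne_zero (NeZero.ne n))).symm⟩
  have h1 : x (j + 1) * lam (N + 1) x y z (j + 1) =
      ∑ m ∈ Finset.range (N + 1), Gaux (N + 1) x y z j (m + 1) := by
    rw [lam, Finset.mul_sum]
    refine Finset.sum_congr rfl fun m _ => ?_
    have hzpart : z (j + 1 + (m : ZMod (N + 1))) = z (j + ((m + 1 : ℕ) : ZMod (N + 1))) := by
      congr 1; push_cast; ring
    have hypart : ∏ k ∈ Finset.Icc (m + 1) (N + 1 - 1), y (j + 1 + (k : ZMod (N + 1))) =
        ∏ k ∈ Finset.Icc (m + 1 + 1) (N + 1), y (j + (k : ZMod (N + 1))) := by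
      rw [show N + 1 - 1 = N from rfl,
        show Finset.Icc (m + 1 + 1) (N + 1) = (Finset.Icc (m + 1) N).map
          (addRightEmbedding 1) from (Finset.map_add_right_Icc _ _ _).symm,
        Finset.prod_map]
      refine Finset.prod_congr rfl fun k _ => ?_
      simp only [addRightEmbedding_apply]
      congr 1; push_cast; ring
    rw [Gaux, ← xpart_aux, hzpart, hypart]
    ring
  have h2 : y j * lam (N + 1) x y z j = ∑ m ∈ Finset.range (N + 1), Gaux (N + 1) x y z j m := by
    rw [lam, Finset.mul_sum]
    refine Finset.sum_congr rfl fun m hm => ?_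
    have hm' := Finset.mem_range.mp hm
    have hypart : y j * ∏ k ∈ Finset.Icc (m + 1) (N + 1 - 1), y (j + (k : ZMod (N + 1))) =
        ∏ k ∈ Finset.Icc (m + 1) (N + 1), y (j + (k : ZMod (N + 1))) := by
      rw [Finset.prod_Icc_succ_top (by omega : m + 1 ≤ N + 1),
        show ((N + 1 : ℕ) : ZMod (N + 1)) = 0 from ZMod.natCast_self _, add_zero,
        show N + 1 - 1 = N from rfl]
      ring
    rw [Gaux, ← hypart]
    ring
  have h3 : ∑ m ∈ Finset.range (N + 1), Gaux (N + 1) x y z j (m + 1)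
      - ∑ m ∈ Finset.range (N + 1), Gaux (N + 1) x y z j m
      = Gaux (N + 1) x y z j (N + 1) - Gaux (N + 1) x y z j 0 := by
    rw [← Finset.sum_sub_distrib]
    exact Finset.sum_range_sub (Gaux (N + 1) x y z j) (N + 1)
  have hGn : Gaux (N + 1) x y z j (N + 1) = (∏ k : ZMod (N + 1), x k) * z j := by
    rw [Gaux]
    rw [Finset.Icc_eq_empty (by omega : ¬ N + 1 + 1 ≤ N + 1)]
    simp only [Finset.prod_empty, ZMod.natCast_self, add_zero, mul_one]
    rw [prod_Icc_shift_aux]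
  have hG0 : Gaux (N + 1) x y z j 0 = z j * ∏ k : ZMod (N + 1), y k := by
    rw [Gaux]
    rw [Finset.Icc_eq_empty (by omega : ¬ (1 : ℕ) ≤ 0)]
    simp only [Finset.prod_empty, one_mul, Nat.cast_zero, add_zero, zero_add]
    rw [prod_Icc_shift_aux]
  rw [← h1, ← h2, hGn, hG0] at h3
  linarith

lemma algebra_aux (a b c L L' D : ℝ) (ha : 0 < a) (hb : 0 < b) (hc : 0 < c)
    (hL : 0 < L) (hL' : 0 < L') (hD : D ≠ 0)
    (hkey : a * L' = b * L + c * D) (p : ℝ) (hp : p = D / L) :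
    a / (c * (1 + b / (c * p))) = D / L' ∧
    a / (1 + c * p / b) = b * L / L' ∧
    b * (1 + c * p / b) = a * L' / L ∧
    b * (1 + c * p / b) / (p * (1 + b / (c * p))) = c := by
  subst hp
  have hL0 := hL.ne'
  have hL'0 := hL'.ne'
  have hb0 := hb.ne'
  have hc0 := hc.ne'
  have ha0 := ha.ne'
  have hd1 : 1 + b / (c * (D / L)) = a * L' / (c * D) := by
    field_simp
    linear_combination -hkey
  have hd2 : 1 + c * (D / L) / b = a * L' / (b * L) := by
    field_simp
    linear_combination -hkey
  refine ⟨?_, ?_, ?_, ?_⟩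
  · rw [hd1]
    field_simp
  · rw [hd2]
    field_simp
  · rw [hd2]
    field_simp
  · rw [hd1, hd2]
    field_simp

/-- with `p_j := (∏ x − ∏ y)/λ_j(x,y,z)`, the four identities describing
the effect of one square move as the inserted edge of weight `p` propagates once around the
cylinder. -/
theorem square_move_identities (n : ℕ) [NeZero n] (x y z : ZMod n → ℝ)
    (hx : ∀ i, 0 < x i) (hy : ∀ i, 0 < y i) (hz : ∀ i, 0 < z i)
    (hne : (∏ k : ZMod n, x k) ≠ ∏ k : ZMod n, y k)
    (p : ZMod n → ℝ)
    (hp : ∀ i, p i = ((∏ k : ZMod n, x k) - ∏ k : ZMod n, y k) / lam n x y z i)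
    (j : ZMod n) :
    x (j + 1) / (z j * (1 + y j / (z j * p j))) =
        ((∏ k : ZMod n, x k) - ∏ k : ZMod n, y k) / lam n x y z (j + 1) ∧
      x (j + 1) / (1 + z j * p j / y j) =
        y j * lam n x y z j / lam n x y z (j + 1) ∧
      y j * (1 + z j * p j / y j) =
        x (j + 1) * lam n x y z (j + 1) / lam n x y z j ∧
      y j * (1 + z j * p j / y j) / (p j * (1 + y j / (z j * p j))) = z j := by
  exact algebra_aux (x (j + 1)) (y j) (z j) (lam n x y z j) (lam n x y z (j + 1))
    ((∏ k : ZMod n, x k) - ∏ k : ZMod n, y k) (hx _) (hy _) (hz _)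
    (lam_pos n x y z hx hy hz j) (lam_pos n x y z hx hy hz (j + 1))
    (sub_ne_zero.mpr hne) (key_aux n x y z j) (p j) (hp j)
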